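/- Let |χ⟩ be a unit vector (pure state) on a bipartite system A⊗R, ρ_A = tr_R |χ⟩⟨χ| and ρ_R = tr_A |χ⟩⟨χ|. If weights φ_A on A and φ_R on R satisfy ⟨e^A_i|φ_A|e^A_i⟩ = ⟨e^R_i|φ_R|e^R_i⟩ for all i with 0 < λᵢ < 1 (where λᵢ are the common nonzero eigenvalues of ρ_A and ρ_R, with eigenvectors |e^A_i⟩, |e^R_i⟩ matched by the Schmidt decomposition of |χ⟩), then S_{φ_A}(ρ_A) = S_{φ_R}(ρ_R). -/

import Mathlib

open Matrix BigOperators ComplexOrder Kronecker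

/-- Functional calculus for Hermitian matrices: `matFun f A = Σ f(λᵢ) |eᵢ⟩⟨eᵢ|`
(defined to be `0` if `A` is not Hermitian). -/
noncomputable def matFun {n : Type*} [Fintype n] [DecidableEq n]
    (f : ℝ → ℝ) (A : Matrix n n ℂ) : Matrix n n ℂ :=
  if hA : A.IsHermitian then
    (Matrix.IsHermitian.eigenvectorUnitary hA : Matrix n n ℂ) *
      Matrix.diagonal (fun i => (f (hA.eigenvalues i) : ℂ)) *
      star (Matrix.IsHermitian.eigenvectorUnitary hA : Matrix n n ℂ)
  else 0

/-- Matrix logarithm via functional calculus. -/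
noncomputable def matLog {n : Type*} [Fintype n] [DecidableEq n]
    (A : Matrix n n ℂ) : Matrix n n ℂ := matFun Real.log A

/-- Quantum weighted entropy `S_φ(ρ) = -tr (φ ρ log ρ)`, where `ρ log ρ` is defined by
functional calculus with the convention `0 log 0 = 0` (note `Real.log 0 = 0`). -/
noncomputable def wEnt {n : Type*} [Fintype n] [DecidableEq n]
    (φ ρ : Matrix n n ℂ) : ℂ :=
  -(φ * matFun (fun x => x * Real.log x) ρ).trace

/-- Partial trace over the second (right) factor. -/
noncomputable def ptraceR {a b : Type*} [Fintype a] [Fintype b]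
    (M : Matrix (a × b) (a × b) ℂ) : Matrix a a ℂ :=
  Matrix.of fun i j => ∑ k, M (i, k) (j, k)

/-- Partial trace over the first (left) factor. -/
noncomputable def ptraceL {a b : Type*} [Fintype a] [Fintype b]
    (M : Matrix (a × b) (a × b) ℂ) : Matrix b b ℂ :=
  Matrix.of fun i j => ∑ k, M (k, i) (k, j)

section Aux

open Polynomial

set_option linter.unusedSectionVars false

variable {n ι : Type*} [Fintype n] [DecidableEq n] [Fintype ι] [DecidableEq ι]

private lemma aeval_diagonal' (d : n → ℂ) (p : ℂ[X]) :
    aeval (Matrix.diagonal d) p = Matrix.diagonal (fun i => p.eval (d i)) := by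
  induction p using Polynomial.induction_on' with
  | add p q hp hq => simp [hp, hq, diagonal_add]
  | monomial k c =>
      rw [← smul_X_eq_monomial, _root_.map_smul, map_pow, aeval_X, diagonal_pow]
      ext i j
      by_cases h : i = j <;> simp [Matrix.diagonal_apply, h]

private lemma aeval_conj' (U M : Matrix n n ℂ) (hU : U * star U = 1) (hU' : star U * U = 1)
    (p : ℂ[X]) : aeval (U * M * star U) p = U * aeval M p * star U := by
  have hpow : ∀ k : ℕ, (U * M * star U) ^ k = U * M ^ k * star U := by
    intro k
    induction k with
    | zero => rw [pow_zero, pow_zero, mul_one, hU]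
    | succ k ih =>
        rw [pow_succ, ih, pow_succ, mul_assoc (U * M ^ k), ← mul_assoc (star U),
          ← mul_assoc (star U), hU', one_mul, mul_assoc U, ← mul_assoc (M ^ k),
          ← mul_assoc U, ← mul_assoc U]
  induction p using Polynomial.induction_on' with
  | add p q hp hq => simp [hp, hq, mul_add, add_mul]
  | monomial k c =>
      rw [← smul_X_eq_monomial, _root_.map_smul, _root_.map_smul, map_pow, map_pow, aeval_X,
        aeval_X, hpow, Matrix.mul_smul, Matrix.smul_mul]

private lemma matFun_eq_aeval (f : ℝ → ℝ) (A : Matrix n n ℂ) (hA : A.IsHermitian) (p : ℂ[X])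
    (hp : ∀ i, p.eval ((hA.eigenvalues i : ℂ)) = (f (hA.eigenvalues i) : ℂ)) :
    matFun f A = aeval A p := by
  have hU : (hA.eigenvectorUnitary : Matrix n n ℂ) *
      star (hA.eigenvectorUnitary : Matrix n n ℂ) = 1 :=
    (Matrix.mem_unitaryGroup_iff).mp hA.eigenvectorUnitary.2
  have hU' : star (hA.eigenvectorUnitary : Matrix n n ℂ) *
      (hA.eigenvectorUnitary : Matrix n n ℂ) = 1 :=
    (Matrix.mem_unitaryGroup_iff').mp hA.eigenvectorUnitary.2
  rw [matFun, dif_pos hA]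
  conv_rhs => rw [hA.spectral_theorem, Unitary.conjStarAlgAut_apply]
  rw [aeval_conj' _ _ hU hU', aeval_diagonal']
  congr 2
  ext i j
  by_cases h : i = j <;> simp [Matrix.diagonal_apply, h, hp]

private lemma mul_vecMulVec (M : Matrix n n ℂ) (v w : n → ℂ) :
    M * vecMulVec v w = vecMulVec (M *ᵥ v) w := by
  ext i j
  simp [Matrix.mul_apply, vecMulVec_apply, mulVec, dotProduct, Finset.sum_mul, mul_assoc]

private lemma vecMulVec_mulVec' (v w x : n → ℂ) :
    vecMulVec v w *ᵥ x = (w ⬝ᵥ x) • v := by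
  ext i
  simp [mulVec, vecMulVec_apply, dotProduct, Finset.mul_sum, mul_comm, mul_left_comm]

private lemma smul_vecMulVec (c : ℂ) (v w : n → ℂ) :
    vecMulVec (c • v) w = c • vecMulVec v w := by
  ext i j; simp [vecMulVec_apply, mul_assoc]

private lemma mySum_mulVec (M : ι → Matrix n n ℂ) (x : n → ℂ) :
    (∑ k, M k) *ᵥ x = ∑ k, M k *ᵥ x := by
  ext i
  simp [mulVec, dotProduct, Matrix.sum_apply, Finset.sum_mul]
  rw [Finset.sum_comm]

private lemma rho_mulVec (lam : ι → ℝ) (v : ι → n → ℂ)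
    (horth : ∀ i j, star (v i) ⬝ᵥ v j = if i = j then 1 else 0) (m : ι) :
    (∑ k, (lam k : ℂ) • vecMulVec (v k) (star (v k))) *ᵥ v m = (lam m : ℂ) • v m := by
  rw [mySum_mulVec]
  have : ∀ k, ((lam k : ℂ) • vecMulVec (v k) (star (v k))) *ᵥ v m
      = (if k = m then (lam m : ℂ) else 0) • v k := by
    intro k
    rw [Matrix.smul_mulVec, vecMulVec_mulVec', horth]
    by_cases h : k = m <;> simp [h]
  simp_rw [this]
  simp

private lemma aeval_rho (lam : ι → ℝ) (v : ι → n → ℂ)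
    (horth : ∀ i j, star (v i) ⬝ᵥ v j = if i = j then 1 else 0)
    (p : ℂ[X]) (hp0 : p.eval 0 = 0) :
    aeval (∑ k, (lam k : ℂ) • vecMulVec (v k) (star (v k))) p
      = ∑ k, (p.eval ((lam k : ℂ))) • vecMulVec (v k) (star (v k)) := by
  set ρ := ∑ k, (lam k : ℂ) • vecMulVec (v k) (star (v k)) with hρ
  have hvne : ∀ m, v m ≠ 0 := by
    intro m hm
    have := horth m m
    rw [hm] at this
    simp at this
  have heig : ∀ m, Module.End.HasEigenvector (Matrix.toLinAlgEquiv' ρ) ((lam m : ℂ)) (v m) := by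
    intro m
    refine ⟨Module.End.mem_eigenspace_iff.mpr ?_, hvne m⟩
    rw [Matrix.toLinAlgEquiv'_apply, hρ, rho_mulVec lam v horth]
  have haeval_vec : ∀ (q : ℂ[X]) (m : ι), aeval ρ q *ᵥ v m = (q.eval ((lam m : ℂ))) • v m := by
    intro q m
    have h1 : aeval (Matrix.toLinAlgEquiv' ρ) q = Matrix.toLinAlgEquiv' (aeval ρ q) :=
      aeval_algHom_apply (Matrix.toLinAlgEquiv' : Matrix n n ℂ ≃ₐ[ℂ] _) ρ q
    have := Module.End.aeval_apply_of_hasEigenvector (p := q) (heig m)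
    rw [h1, Matrix.toLinAlgEquiv'_apply] at this
    exact this
  have hc : p.coeff 0 = 0 := by rwa [Polynomial.coeff_zero_eq_eval_zero]
  have hsplit : p.divX * X = p := by
    have h := p.divX_mul_X_add
    rwa [hc, map_zero, add_zero] at h
  conv_lhs => rw [← hsplit]
  rw [_root_.map_mul, aeval_X]
  conv_lhs => rw [hρ]
  rw [Finset.mul_sum]
  refine Finset.sum_congr rfl fun m _ => ?_
  rw [Matrix.mul_smul, _root_.mul_vecMulVec, haeval_vec, _root_.smul_vecMulVec, smul_smul]
  conv_rhs => rw [← hsplit, eval_mul, eval_X]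
  rw [mul_comm]

private lemma schmidt_sum {κ β : Type*} [Fintype κ]
    (lam : ι → ℝ) (hlam : ∀ i, 0 ≤ lam i) (u : ι → β → ℂ) (w : ι → κ → ℂ)
    (horth : ∀ i j, star (w i) ⬝ᵥ w j = if i = j then 1 else 0) (x y : β) :
    ∑ k, (∑ m, (Real.sqrt (lam m) : ℂ) * u m x * w m k) *
        star (∑ n, (Real.sqrt (lam n) : ℂ) * u n y * w n k)
      = ∑ m, (lam m : ℂ) * (u m x * star (u m y)) := by
  have hsq : ∀ m, star ((Real.sqrt (lam m) : ℂ)) = (Real.sqrt (lam m) : ℂ) := by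
    intro m; exact Complex.conj_ofReal _
  calc ∑ k, (∑ m, (Real.sqrt (lam m) : ℂ) * u m x * w m k) *
        star (∑ n, (Real.sqrt (lam n) : ℂ) * u n y * w n k)
      = ∑ k, ∑ m, ∑ n, ((Real.sqrt (lam m) : ℂ) * (Real.sqrt (lam n) : ℂ) *
          (u m x * star (u n y))) * (w m k * star (w n k)) := by
        refine Finset.sum_congr rfl fun k _ => ?_
        rw [star_sum, Finset.sum_mul_sum]
        refine Finset.sum_congr rfl fun m _ => Finset.sum_congr rfl fun n _ => ?_
        simp only [star_mul', hsq]
        ring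
    _ = ∑ m, ∑ n, ((Real.sqrt (lam m) : ℂ) * (Real.sqrt (lam n) : ℂ) *
          (u m x * star (u n y))) * (∑ k, w m k * star (w n k)) := by
        rw [Finset.sum_comm]
        refine Finset.sum_congr rfl fun m _ => ?_
        rw [Finset.sum_comm]
        refine Finset.sum_congr rfl fun n _ => ?_
        rw [Finset.mul_sum]
    _ = ∑ m, (lam m : ℂ) * (u m x * star (u m y)) := by
        refine Finset.sum_congr rfl fun m _ => ?_
        have hin : ∀ n, (∑ k, w m k * star (w n k)) = if n = m then 1 else 0 := by
          intro n
          have := horth n m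
          rw [dotProduct] at this
          rw [← this]
          exact Finset.sum_congr rfl fun k _ => by rw [Pi.star_apply, mul_comm]
        simp_rw [hin, mul_ite, mul_one, mul_zero]
        rw [Finset.sum_ite_eq' Finset.univ m]
        simp only [Finset.mem_univ, if_true]
        rw [← Complex.ofReal_mul, Real.mul_self_sqrt (hlam m)]

private lemma trace_mul_vv (φ : Matrix n n ℂ) (v : n → ℂ) :
    (φ * vecMulVec v (star v)).trace = star v ⬝ᵥ (φ *ᵥ v) := by
  rw [_root_.mul_vecMulVec, Matrix.trace, dotProduct]
  simp [Matrix.diag, vecMulVec_apply, mul_comm]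

private lemma trace_mul_sum_vv (φ : Matrix n n ℂ) (c : ι → ℂ) (v : ι → n → ℂ) :
    (φ * ∑ k, c k • vecMulVec (v k) (star (v k))).trace
      = ∑ k, c k * (star (v k) ⬝ᵥ φ *ᵥ v k) := by
  rw [Finset.mul_sum, Matrix.trace_sum]
  refine Finset.sum_congr rfl fun k _ => ?_
  rw [Matrix.mul_smul, Matrix.trace_smul, trace_mul_vv, smul_eq_mul]

end Aux

/-- Purification identity for quantum weighted entropy: if `|χ⟩ = Σᵢ √λᵢ |e^A_i⟩⊗|e^R_i⟩`
is a Schmidt-decomposed pure state on `A ⊗ R`, with reduced states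
`ρ_A = tr_R |χ⟩⟨χ|`, `ρ_R = tr_A |χ⟩⟨χ|`, and the weights `φ_A`, `φ_R` satisfy
`⟨e^A_i|φ_A|e^A_i⟩ = ⟨e^R_i|φ_R|e^R_i⟩` whenever `0 < λᵢ < 1`, then
`S_{φ_A}(ρ_A) = S_{φ_R}(ρ_R)`. -/
theorem wEnt_purification {a r ι : Type*} [Fintype a] [DecidableEq a]
    [Fintype r] [DecidableEq r] [Fintype ι] [DecidableEq ι]
    (χ : a × r → ℂ) (hχ : star χ ⬝ᵥ χ = 1)
    (lam : ι → ℝ) (hlam : ∀ i, 0 ≤ lam i)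
    (eA : ι → (a → ℂ)) (eR : ι → (r → ℂ))
    (horthA : ∀ i j, star (eA i) ⬝ᵥ eA j = if i = j then 1 else 0)
    (horthR : ∀ i j, star (eR i) ⬝ᵥ eR j = if i = j then 1 else 0)
    (hSchmidt : ∀ p : a × r, χ p = ∑ i, (Real.sqrt (lam i) : ℂ) * eA i p.1 * eR i p.2)
    (φA : Matrix a a ℂ) (φR : Matrix r r ℂ) (hφA : φA.PosSemidef) (hφR : φR.PosSemidef)
    (hconj : ∀ i, 0 < lam i → lam i < 1 →
      star (eA i) ⬝ᵥ φA *ᵥ eA i = star (eR i) ⬝ᵥ φR *ᵥ eR i) :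
    wEnt φA (ptraceR (Matrix.vecMulVec χ (star χ))) =
      wEnt φR (ptraceL (Matrix.vecMulVec χ (star χ))) := by
  classical
  set f : ℝ → ℝ := fun x => x * Real.log x with hf
  set ρA := ∑ m, (lam m : ℂ) • vecMulVec (eA m) (star (eA m)) with hρAdef
  set ρR := ∑ m, (lam m : ℂ) • vecMulVec (eR m) (star (eR m)) with hρRdef
  have hρA : ptraceR (Matrix.vecMulVec χ (star χ)) = ρA := by
    ext i j
    show ∑ k, (vecMulVec χ (star χ)) (i, k) (j, k) = _
    simp only [vecMulVec_apply, Pi.star_apply]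
    calc ∑ k, χ (i, k) * star (χ (j, k))
        = ∑ k, (∑ m, (Real.sqrt (lam m) : ℂ) * eA m i * eR m k) *
            star (∑ n', (Real.sqrt (lam n') : ℂ) * eA n' j * eR n' k) := by
          refine Finset.sum_congr rfl fun k _ => ?_
          rw [hSchmidt (i, k), hSchmidt (j, k)]
      _ = ∑ m, (lam m : ℂ) * (eA m i * star (eA m j)) :=
          schmidt_sum lam hlam eA eR horthR i j
      _ = ρA i j := by
          rw [hρAdef]
          simp [Matrix.sum_apply, Matrix.smul_apply, vecMulVec_apply, smul_eq_mul, mul_assoc]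
  have hρR : ptraceL (Matrix.vecMulVec χ (star χ)) = ρR := by
    ext i j
    show ∑ k, (vecMulVec χ (star χ)) (k, i) (k, j) = _
    simp only [vecMulVec_apply, Pi.star_apply]
    calc ∑ k, χ (k, i) * star (χ (k, j))
        = ∑ k, (∑ m, (Real.sqrt (lam m) : ℂ) * eR m i * eA m k) *
            star (∑ n', (Real.sqrt (lam n') : ℂ) * eR n' j * eA n' k) := by
          refine Finset.sum_congr rfl fun k _ => ?_
          rw [hSchmidt (k, i), hSchmidt (k, j)]
          congr 1
          · exact Finset.sum_congr rfl fun m _ => by ring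
          · congr 1
            exact Finset.sum_congr rfl fun m _ => by ring
      _ = ∑ m, (lam m : ℂ) * (eR m i * star (eR m j)) :=
          schmidt_sum lam hlam eR eA horthA i j
      _ = ρR i j := by
          rw [hρRdef]
          simp [Matrix.sum_apply, Matrix.smul_apply, vecMulVec_apply, smul_eq_mul, mul_assoc]
  have hHA : ρA.IsHermitian := by
    rw [hρAdef]
    show _ᴴ = _
    ext i j
    simp only [Matrix.conjTranspose_apply, Matrix.sum_apply, Matrix.smul_apply,
      vecMulVec_apply, star_sum, star_smul, star_mul', star_star, smul_eq_mul,
      Pi.star_apply, Complex.star_def, Complex.conj_ofReal, Complex.conj_conj]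
    exact Finset.sum_congr rfl fun m _ => by ring
  have hHR : ρR.IsHermitian := by
    rw [hρRdef]
    show _ᴴ = _
    ext i j
    simp only [Matrix.conjTranspose_apply, Matrix.sum_apply, Matrix.smul_apply,
      vecMulVec_apply, star_sum, star_smul, star_mul', star_star, smul_eq_mul,
      Pi.star_apply, Complex.star_def, Complex.conj_ofReal, Complex.conj_conj]
    exact Finset.sum_congr rfl fun m _ => by ring
  -- the total weight is 1
  have h1 : (ptraceR (Matrix.vecMulVec χ (star χ))).trace = star χ ⬝ᵥ χ := by
    rw [Matrix.trace, dotProduct]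
    simp [Matrix.diag, ptraceR, vecMulVec_apply, Fintype.sum_prod_type, mul_comm]
  have h2 : ρA.trace = ∑ m, (lam m : ℂ) := by
    rw [hρAdef, Matrix.trace_sum]
    refine Finset.sum_congr rfl fun m _ => ?_
    rw [Matrix.trace_smul]
    have hm := horthA m m
    rw [if_pos rfl, dotProduct] at hm
    have : (vecMulVec (eA m) (star (eA m))).trace = 1 := by
      rw [Matrix.trace, ← hm]
      simp [Matrix.diag, vecMulVec_apply, mul_comm]
    rw [this, smul_eq_mul, mul_one]
  have hsumC : (∑ m, (lam m : ℂ)) = 1 := by rw [← h2, ← hρA, h1, hχ]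
  have hsumR : (∑ m, lam m) = 1 := by
    have : ((∑ m, lam m : ℝ) : ℂ) = ((1 : ℝ) : ℂ) := by
      push_cast
      rw [hsumC]
    exact_mod_cast this
  have hle1 : ∀ m, lam m ≤ 1 := by
    intro m
    calc lam m ≤ ∑ k, lam k :=
          Finset.single_le_sum (fun i _ => hlam i) (Finset.mem_univ m)
      _ = 1 := hsumR
  -- the interpolation polynomial
  set s : Finset ℝ := ((Finset.univ.image hHA.eigenvalues ∪ Finset.univ.image hHR.eigenvalues) ∪
    Finset.univ.image lam) ∪ {0} with hs
  set P : Polynomial ℂ := (Lagrange.interpolate s id f).map (algebraMap ℝ ℂ) with hP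
  have hPeval : ∀ x ∈ s, P.eval ((x : ℝ) : ℂ) = ((f x : ℝ) : ℂ) := by
    intro x hx
    rw [hP, Polynomial.eval_map,
      show ((x : ℂ)) = algebraMap ℝ ℂ x from rfl, Polynomial.eval₂_at_apply,
      show Polynomial.eval x (Lagrange.interpolate s id f) = Polynomial.eval (id x) (Lagrange.interpolate s id f) from rfl,
      Lagrange.eval_interpolate_at_node f (Set.injOn_id _) hx]
    rfl
  have hf0 : f 0 = 0 := by rw [hf]; simp
  have hf1 : f 1 = 0 := by rw [hf]; simp
  have h0s : (0 : ℝ) ∈ s := by rw [hs]; simp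
  have hlams : ∀ m, lam m ∈ s := by
    intro m
    rw [hs]
    simp only [Finset.mem_union, Finset.mem_image, Finset.mem_univ, true_and]
    exact Or.inl (Or.inr ⟨m, rfl⟩)
  have heigA : ∀ i, hHA.eigenvalues i ∈ s := by
    intro i
    rw [hs]
    simp only [Finset.mem_union, Finset.mem_image, Finset.mem_univ, true_and]
    exact Or.inl (Or.inl (Or.inl ⟨i, rfl⟩))
  have heigR : ∀ i, hHR.eigenvalues i ∈ s := by
    intro i
    rw [hs]
    simp only [Finset.mem_union, Finset.mem_image, Finset.mem_univ, true_and]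
    exact Or.inl (Or.inl (Or.inr ⟨i, rfl⟩))
  have hP0 : P.eval 0 = 0 := by
    rw [show (0 : ℂ) = ((0 : ℝ) : ℂ) by norm_num, hPeval 0 h0s, hf0]
  have hmatA : matFun f ρA = ∑ m, ((f (lam m) : ℝ) : ℂ) • vecMulVec (eA m) (star (eA m)) := by
    rw [matFun_eq_aeval f ρA hHA P (fun i => hPeval _ (heigA i)), hρAdef,
      aeval_rho lam eA horthA P hP0]
    exact Finset.sum_congr rfl fun m _ => by rw [hPeval _ (hlams m)]
  have hmatR : matFun f ρR = ∑ m, ((f (lam m) : ℝ) : ℂ) • vecMulVec (eR m) (star (eR m)) := by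
    rw [matFun_eq_aeval f ρR hHR P (fun i => hPeval _ (heigR i)), hρRdef,
      aeval_rho lam eR horthR P hP0]
    exact Finset.sum_congr rfl fun m _ => by rw [hPeval _ (hlams m)]
  unfold wEnt
  rw [← hf, hρA, hρR, hmatA, hmatR, trace_mul_sum_vv, trace_mul_sum_vv, neg_inj]
  refine Finset.sum_congr rfl fun m _ => ?_
  rcases (hlam m).eq_or_lt with h0 | h0
  · rw [← h0, hf0]
    norm_num
  · rcases (hle1 m).lt_or_eq with hlt | heq
    · rw [hconj m h0 hlt]
    · rw [heq, hf1]
      norm_num
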